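/- Let f: ℝⁿ → ℝ be α-strongly convex, A ∈ ℝ^{m×n} with full row rank, b ∈ ℝᵐ, x ∈ ℝⁿ and x* ∈ ∂f(x). Let x̂ = ∇f*(x* − Aᵀŵ) where ŵ minimizes w ↦ f*(x* − Aᵀw) + ⟨w, b⟩, and set x̂* := x* − Aᵀŵ. Then x̂ ∈ L(A,b) := {y : Ay = b}, x̂* ∈ ∂f(x̂), and for all y ∈ L(A,b): D_f^{x̂*}(x̂, y) ≤ D_f^{x*}(x, y) − (α/2)·‖(AAᵀ)^{−1/2}(Ax − b)‖². -/

import Mathlib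

open RealInnerProductSpace

set_option maxHeartbeats 2000000

/-- Bregman projection onto the affine subspace `L(A,b)` via the dual
problem, together with the descent estimate involving `(AAᵀ)^{-1/2}`. Here `S` plays the
role of `(AAᵀ)^{-1/2}`: it is symmetric and `(A Aᵀ) ∘ (S ∘ S) = id`. -/
theorem stmt_19 {m n : ℕ} (f : EuclideanSpace ℝ (Fin n) → ℝ) (α : ℝ) (hα : 0 < α)
    (hconv : ConvexOn ℝ Set.univ f)
    (hsc : ∀ x y xs : EuclideanSpace ℝ (Fin n),
      (∀ z, f x + ⟪xs, z - x⟫ ≤ f z) →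
      f x + ⟪xs, y - x⟫ + α / 2 * ‖y - x‖ ^ 2 ≤ f y)
    (fstar : EuclideanSpace ℝ (Fin n) → ℝ)
    (hfstar : ∀ w, fstar w = ⨆ z : EuclideanSpace ℝ (Fin n), (⟪w, z⟫ - f z))
    (g : EuclideanSpace ℝ (Fin n) → EuclideanSpace ℝ (Fin n))
    (hg : ∀ w, HasGradientAt fstar (g w) w)
    (A : EuclideanSpace ℝ (Fin n) →ₗ[ℝ] EuclideanSpace ℝ (Fin m))
    (hAsurj : Function.Surjective A)
    (b : EuclideanSpace ℝ (Fin m))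
    (x xs : EuclideanSpace ℝ (Fin n))
    (hxs : ∀ z, f x + ⟪xs, z - x⟫ ≤ f z)
    (what : EuclideanSpace ℝ (Fin m))
    (hwhat : ∀ w : EuclideanSpace ℝ (Fin m),
      fstar (xs - LinearMap.adjoint A what) + ⟪what, b⟫ ≤
        fstar (xs - LinearMap.adjoint A w) + ⟪w, b⟫)
    (xhat xhs : EuclideanSpace ℝ (Fin n))
    (hxhat : xhat = g (xs - LinearMap.adjoint A what))
    (hxhs : xhs = xs - LinearMap.adjoint A what)
    (S : EuclideanSpace ℝ (Fin m) →ₗ[ℝ] EuclideanSpace ℝ (Fin m))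
    (hSsym : ∀ z w : EuclideanSpace ℝ (Fin m), ⟪S z, w⟫ = ⟪z, S w⟫)
    (hSinv : (A ∘ₗ LinearMap.adjoint A) ∘ₗ (S ∘ₗ S) = LinearMap.id) :
    A xhat = b ∧
    (∀ z, f xhat + ⟪xhs, z - xhat⟫ ≤ f z) ∧
    (∀ y : EuclideanSpace ℝ (Fin n), A y = b →
      f y - f xhat - ⟪xhs, y - xhat⟫ ≤
        (f y - f x - ⟪xs, y - x⟫) - α / 2 * ‖S (A x - b)‖ ^ 2) := by
  -- AM-GM type inequality
  have key : ∀ c d : EuclideanSpace ℝ (Fin n),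
      ⟪c, d⟫ - α / 2 * ‖d‖ ^ 2 ≤ ‖c‖ ^ 2 / (2 * α) := by
    intro c d
    rw [le_div_iff₀ (by positivity : (0:ℝ) < 2 * α)]
    have h1 : ⟪c, d⟫ ≤ ‖c‖ * ‖d‖ := real_inner_le_norm c d
    nlinarith [sq_nonneg (α * ‖d‖ - ‖c‖), norm_nonneg c, norm_nonneg d,
      mul_le_mul_of_nonneg_left h1 (by positivity : (0:ℝ) ≤ 2 * α)]
  -- pointwise upper bound for the conjugate sup
  have bddp : ∀ w z : EuclideanSpace ℝ (Fin n),
      ⟪w, z⟫ - f z ≤ ⟪w, x⟫ - f x + ‖w - xs‖ ^ 2 / (2 * α) := by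
    intro w z
    have h1 := hsc x z xs hxs
    have h2 := key (w - xs) (z - x)
    have h3 : ⟪w, z⟫ - ⟪xs, z - x⟫ = ⟪w - xs, z - x⟫ + ⟪w, x⟫ := by
      simp only [inner_sub_left, inner_sub_right]; ring
    linarith
  have hbdd : ∀ w : EuclideanSpace ℝ (Fin n),
      BddAbove (Set.range fun z => ⟪w, z⟫ - f z) := by
    intro w
    exact ⟨⟪w, x⟫ - f x + ‖w - xs‖ ^ 2 / (2 * α), by rintro _ ⟨z, rfl⟩; exact bddp w z⟩
  have hle_fstar : ∀ w z : EuclideanSpace ℝ (Fin n), ⟪w, z⟫ - f z ≤ fstar w := by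
    intro w z
    rw [hfstar w]
    exact le_ciSup (hbdd w) z
  -- attainment + smoothness from a subgradient pair
  have smooth : ∀ u w : EuclideanSpace ℝ (Fin n), (∀ z, f u + ⟪w, z - u⟫ ≤ f z) →
      (fstar w = ⟪w, u⟫ - f u) ∧
      ∀ z, fstar z ≤ fstar w + ⟪u, z - w⟫ + ‖z - w‖ ^ 2 / (2 * α) := by
    intro u w hu
    have hA : fstar w = ⟪w, u⟫ - f u := by
      refine le_antisymm ?_ (hle_fstar w u)
      rw [hfstar w]
      refine ciSup_le fun z => ?_
      have h1 := hu z
      have h4 : ⟪w, z - u⟫ = ⟪w, z⟫ - ⟪w, u⟫ := inner_sub_right _ _ _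
      linarith
    refine ⟨hA, fun z => ?_⟩
    rw [hfstar z, hA]
    refine ciSup_le fun y => ?_
    have h1 := hsc u y w hu
    have h2 := key (z - w) (y - u)
    have h3 : ⟪z, y⟫ - ⟪w, y - u⟫ = ⟪z - w, y - u⟫ + ⟪z, u⟫ := by
      simp only [inner_sub_left, inner_sub_right]; ring
    have h5 : ⟪u, z - w⟫ = ⟪z, u⟫ - ⟪w, u⟫ := by
      rw [inner_sub_right, real_inner_comm u z, real_inner_comm u w]
    linarith
  -- continuity of f
  have fcont : Continuous f := by
    rw [← continuousOn_univ]
    exact hconv.continuousOn isOpen_univ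
  -- MAIN: for every w, g w is a point where w is a subgradient of f
  have main : ∀ w z : EuclideanSpace ℝ (Fin n), f (g w) + ⟪w, z - g w⟫ ≤ f z := by
    intro w
    set h : EuclideanSpace ℝ (Fin n) → ℝ := fun z => f z - ⟪w, z⟫ with hh
    have hcont : Continuous h := fcont.sub (continuous_const.inner continuous_id)
    set R : ℝ := 2 * ‖xs - w‖ / α + 1 with hR
    have hR0 : 0 ≤ R := by positivity
    have coer : ∀ z : EuclideanSpace ℝ (Fin n), R ≤ ‖z - x‖ → h x ≤ h z := by
      intro z hz
      have h1 := hsc x z xs hxs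
      have h2 : -(‖xs - w‖ * ‖z - x‖) ≤ ⟪xs - w, z - x⟫ := by
        have := abs_real_inner_le_norm (xs - w) (z - x)
        cases' abs_le.1 this with hl hr
        linarith
      have h3 : ⟪xs, z - x⟫ = ⟪xs - w, z - x⟫ + ⟪w, z - x⟫ := by
        rw [inner_sub_left]; ring
      have h4 : ⟪w, z - x⟫ = ⟪w, z⟫ - ⟪w, x⟫ := inner_sub_right _ _ _
      have hz' : 2 * ‖xs - w‖ + α ≤ α * ‖z - x‖ := by
        have hmul := mul_le_mul_of_nonneg_left hz hα.le
        have heq : α * R = 2 * ‖xs - w‖ + α := by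
          rw [hR]; field_simp
        linarith
      have hnn : (0 : ℝ) ≤ ‖z - x‖ := norm_nonneg _
      have hquad : ‖xs - w‖ * ‖z - x‖ ≤ α / 2 * ‖z - x‖ ^ 2 := by
        nlinarith [norm_nonneg (xs - w)]
      simp only [hh]
      linarith
    obtain ⟨p, hpK, hpmin⟩ := (isCompact_closedBall x R).exists_isMinOn
      ⟨x, Metric.mem_closedBall_self hR0⟩ hcont.continuousOn
    have hglob : ∀ z, h p ≤ h z := by
      intro z
      by_cases hzK : z ∈ Metric.closedBall x R
      · exact hpmin hzK
      · have hz : R ≤ ‖z - x‖ := by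
          rw [Metric.mem_closedBall, dist_eq_norm] at hzK
          linarith [not_le.1 hzK]
        exact le_trans (hpmin (Metric.mem_closedBall_self hR0)) (coer z hz)
    have hsub : ∀ z, f p + ⟪w, z - p⟫ ≤ f z := by
      intro z
      have h1 : f p - ⟪w, p⟫ ≤ f z - ⟪w, z⟫ := hglob z
      have h4 : ⟪w, z - p⟫ = ⟪w, z⟫ - ⟪w, p⟫ := inner_sub_right _ _ _
      linarith
    have hfsw : fstar w = ⟪w, p⟫ - f p := (smooth p w hsub).1
    have hgp : g w = p := by
      have hψmin : IsLocalMin (fun z => fstar z - ⟪p, z⟫) w := by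
        refine Filter.Eventually.of_forall fun z => ?_
        have h5 := hle_fstar z p
        have h6 : ⟪z, p⟫ = ⟪p, z⟫ := real_inner_comm _ _
        have h7 : ⟪w, p⟫ = ⟪p, w⟫ := real_inner_comm _ _
        simp only [hfsw]
        linarith
      have hdin : HasFDerivAt (fun z : EuclideanSpace ℝ (Fin n) => (⟪p, z⟫ : ℝ))
          (innerSL ℝ p) w := (innerSL ℝ p).hasFDerivAt
      have hd : HasFDerivAt (fun z => fstar z - ⟪p, z⟫)
          (InnerProductSpace.toDual ℝ (EuclideanSpace ℝ (Fin n)) (g w) - innerSL ℝ p) w :=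
        ((hg w).hasFDerivAt).sub hdin
      have h0 := hψmin.hasFDerivAt_eq_zero hd
      refine ext_inner_left ℝ fun v => ?_
      have h9 : (InnerProductSpace.toDual ℝ (EuclideanSpace ℝ (Fin n)) (g w)
          - innerSL ℝ p) v = 0 := by rw [h0]; simp
      simp only [ContinuousLinearMap.sub_apply, InnerProductSpace.toDual_apply_apply,
        innerSL_apply_apply] at h9
      rw [real_inner_comm (g w) v, real_inner_comm p v]
      linarith
    intro z
    rw [hgp]
    exact hsub z
  -- Part 2
  have part2 : ∀ z, f xhat + ⟪xhs, z - xhat⟫ ≤ f z := by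
    intro z
    rw [hxhat, hxhs]
    exact main (xs - LinearMap.adjoint A what) z
  have hsm_x := smooth x xs hxs
  have hsm_h := smooth xhat xhs part2
  -- Part 1
  have part1 : A xhat = b := by
    obtain ⟨e, he⟩ : ∃ e, e = b - A xhat := ⟨_, rfl⟩
    have ht : ∀ t : ℝ, 0 ≤ -t * ‖e‖ ^ 2 + t ^ 2 * (‖LinearMap.adjoint A e‖ ^ 2 / (2 * α)) := by
      intro t
      have h1 := hwhat (what - t • e)
      have h2 : xs - LinearMap.adjoint A (what - t • e) = xhs + t • LinearMap.adjoint A e := by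
        rw [hxhs, map_sub, map_smul]
        abel
      rw [h2, ← hxhs] at h1
      have h3 := hsm_h.2 (xhs + t • LinearMap.adjoint A e)
      have h4 : xhs + t • LinearMap.adjoint A e - xhs = t • LinearMap.adjoint A e :=
        add_sub_cancel_left _ _
      rw [h4] at h3
      have h5 : ⟪xhat, t • LinearMap.adjoint A e⟫ = t * ⟪A xhat, e⟫ := by
        rw [real_inner_smul_right, LinearMap.adjoint_inner_right]
      have h6 : ‖t • LinearMap.adjoint A e‖ ^ 2 = t ^ 2 * ‖LinearMap.adjoint A e‖ ^ 2 := by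
        rw [norm_smul, mul_pow, Real.norm_eq_abs, sq_abs]
      have h7 : ⟪what - t • e, b⟫ = ⟪what, b⟫ - t * ⟪e, b⟫ := by
        rw [inner_sub_left, real_inner_smul_left]
      have h8 : ⟪e, b⟫ - ⟪e, A xhat⟫ = ‖e‖ ^ 2 := by
        rw [← inner_sub_right, ← he, real_inner_self_eq_norm_sq]
      have h8t : t * ⟪e, b⟫ - t * ⟪e, A xhat⟫ = t * ‖e‖ ^ 2 := by
        rw [← h8]; ring
      have h9t : t * ⟪A xhat, e⟫ = t * ⟪e, A xhat⟫ := by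
        rw [real_inner_comm (A xhat) e]
      have h10 : ‖t • LinearMap.adjoint A e‖ ^ 2 / (2 * α) =
          t ^ 2 * (‖LinearMap.adjoint A e‖ ^ 2 / (2 * α)) := by
        rw [h6]; ring
      linarith [h1, h3, h5, h7, h8t, h9t, h10]
    have hdiv : ∀ t : ℝ, 0 < t →
        ‖e‖ ^ 2 ≤ t * (‖LinearMap.adjoint A e‖ ^ 2 / (2 * α)) := by
      intro t htpos
      have h1 := ht t
      nlinarith [mul_pos htpos htpos]
    obtain ⟨C', hC'⟩ : ∃ C', C' = ‖LinearMap.adjoint A e‖ ^ 2 / (2 * α) := ⟨_, rfl⟩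
    rw [← hC'] at hdiv
    have hC0 : 0 ≤ C' := by rw [hC']; positivity
    have hesq : ‖e‖ ^ 2 ≤ 0 := by
      by_contra hcon
      push_neg at hcon
      have h1 := hdiv (‖e‖ ^ 2 / (C' + 1)) (div_pos hcon (by linarith))
      rw [div_mul_eq_mul_div, le_div_iff₀ (by linarith : (0:ℝ) < C' + 1)] at h1
      nlinarith
    have hnorm : ‖e‖ ^ 2 = 0 := le_antisymm hesq (sq_nonneg _)
    have he0 : e = 0 :=
      norm_eq_zero.1 ((pow_eq_zero_iff (by norm_num : (2:ℕ) ≠ 0)).1 hnorm)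
    rw [he] at he0
    exact (sub_eq_zero.1 he0).symm
  refine ⟨part1, part2, ?_⟩
  -- Part 3
  intro y hy
  have hSr : ⟪S (S (A x - b)), A x - b⟫ = ‖S (A x - b)‖ ^ 2 := by
    rw [hSsym (S (A x - b)) (A x - b), real_inner_self_eq_norm_sq]
  have hAStS : A (LinearMap.adjoint A (S (S (A x - b)))) = A x - b := by
    have := LinearMap.ext_iff.1 hSinv (A x - b)
    simpa [LinearMap.comp_apply] using this
  have hnormAt : ‖LinearMap.adjoint A (S (S (A x - b)))‖ ^ 2 = ‖S (A x - b)‖ ^ 2 := by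
    rw [← real_inner_self_eq_norm_sq, LinearMap.adjoint_inner_left, hAStS]
    exact hSr
  -- dual bound with trial point α • S (S (A x - b))
  have hdual : fstar xhs + ⟪what, b⟫ ≤ fstar xs - α / 2 * ‖S (A x - b)‖ ^ 2 := by
    have h1 := hwhat (α • S (S (A x - b)))
    rw [← hxhs] at h1
    have h2 : xs - LinearMap.adjoint A (α • S (S (A x - b))) =
        xs - α • LinearMap.adjoint A (S (S (A x - b))) := by rw [map_smul]
    rw [h2] at h1
    have h3 := hsm_x.2 (xs - α • LinearMap.adjoint A (S (S (A x - b))))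
    have h4 : xs - α • LinearMap.adjoint A (S (S (A x - b))) - xs =
        -(α • LinearMap.adjoint A (S (S (A x - b)))) := by abel
    rw [h4] at h3
    have h5 : ⟪x, -(α • LinearMap.adjoint A (S (S (A x - b))))⟫ =
        -(α * ⟪S (S (A x - b)), A x⟫) := by
      rw [inner_neg_right, real_inner_smul_right, LinearMap.adjoint_inner_right,
        real_inner_comm]
    have h6 : ‖-(α • LinearMap.adjoint A (S (S (A x - b))))‖ ^ 2 / (2 * α) =
        α / 2 * ‖S (A x - b)‖ ^ 2 := by
      rw [norm_neg, norm_smul, mul_pow, Real.norm_eq_abs, sq_abs, hnormAt]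
      field_simp
    have h7 : ⟪α • S (S (A x - b)), b⟫ = α * ⟪S (S (A x - b)), b⟫ :=
      real_inner_smul_left _ _ _
    have h8 : ⟪S (S (A x - b)), A x⟫ - ⟪S (S (A x - b)), b⟫ = ‖S (A x - b)‖ ^ 2 := by
      rw [← inner_sub_right]
      exact hSr
    have h8t : α * ⟪S (S (A x - b)), A x⟫ - α * ⟪S (S (A x - b)), b⟫ =
        α * ‖S (A x - b)‖ ^ 2 := by rw [← h8]; ring
    linarith [h1, h3, h5, h6, h7, h8t]
  have hfx : f x = ⟪xs, x⟫ - fstar xs := by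
    have := hsm_x.1; linarith
  have hfxh : f xhat = ⟪xhs, xhat⟫ - fstar xhs := by
    have := hsm_h.1; linarith
  have hwy : ⟪xs, y⟫ - ⟪xhs, y⟫ = ⟪what, b⟫ := by
    have h1 : xs - xhs = LinearMap.adjoint A what := by rw [hxhs]; abel
    rw [← inner_sub_left, h1, LinearMap.adjoint_inner_left, hy]
  have e1 : ⟪xhs, y - xhat⟫ = ⟪xhs, y⟫ - ⟪xhs, xhat⟫ := inner_sub_right _ _ _
  have e2 : ⟪xs, y - x⟫ = ⟪xs, y⟫ - ⟪xs, x⟫ := inner_sub_right _ _ _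
  rw [e1, e2, hfx, hfxh]
  linarith
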